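/- (Mao Cheng) Let p, t be positive integers and let G[B∪C] be a finite bipartite graph with parts B and C. There exist p pairwise edge-disjoint matchings in G[B∪C] whose cardinalities sum to t if and only if for all B″ ⊆ B and all C″ ⊆ C, |∂(B″) ∩ ∂(C″)| + p(|B| + |C| − |B″| − |C″|) ≥ t. -/

import Mathlib

open SimpleGraph

variable {V : Type*}

/-- The set of edges of a triangle, given by its vertex set `t`:
all unordered pairs of distinct vertices of `t`. -/
def triangleEdges (t : Finset V) : Set (Sym2 V) :=
  {e | ∃ u ∈ t, ∃ v ∈ t, u ≠ v ∧ e = s(u, v)}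

/-- `E'` is a `𝒯`-transversal of `G`: a set of edges of `G` meeting every triangle of `G`. -/
def IsTriTransversal (G : SimpleGraph V) (E' : Set (Sym2 V)) : Prop :=
  E' ⊆ G.edgeSet ∧ ∀ t : Finset V, G.IsNClique 3 t → ∃ e ∈ triangleEdges t, e ∈ E'

/-- `τ△ G`: the minimum cardinality of a `𝒯`-transversal of `G`. -/
noncomputable def triTransversalNum (G : SimpleGraph V) : ℕ :=
  sInf {n | ∃ E' : Set (Sym2 V), IsTriTransversal G E' ∧ E'.ncard = n}

/-- `P` is a packing in `G`: a set of triangles of `G` that are pairwise edge-disjoint. -/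
def IsTriPacking (G : SimpleGraph V) (P : Set (Finset V)) : Prop :=
  (∀ t ∈ P, G.IsNClique 3 t) ∧
    P.Pairwise fun t t' => Disjoint (triangleEdges t) (triangleEdges t')

/-- `ν△ G`: the maximum cardinality of a packing of triangles in `G`. -/
noncomputable def triPackingNum (G : SimpleGraph V) : ℕ :=
  sSup {n | ∃ P : Set (Finset V), IsTriPacking G P ∧ P.ncard = n}

/-- The set of edges of `G` with one endpoint in `M` and the other in `W`. -/
def edgesBetween (G : SimpleGraph V) (M W : Set V) : Set (Sym2 V) :=
  {e | e ∈ G.edgeSet ∧ ∃ u ∈ M, ∃ w ∈ W, e = s(u, w)}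

/-- `G` is tripartite with parts `A`, `B`, `C`: the vertex set is partitioned into
the three independent sets `A`, `B`, `C`. -/
def IsTripartition (G : SimpleGraph V) (A B C : Set V) : Prop :=
  A ∪ B ∪ C = Set.univ ∧ Disjoint A B ∧ Disjoint A C ∧ Disjoint B C ∧
    (∀ u ∈ A, ∀ v ∈ A, ¬G.Adj u v) ∧ (∀ u ∈ B, ∀ v ∈ B, ¬G.Adj u v) ∧
    (∀ u ∈ C, ∀ v ∈ C, ¬G.Adj u v)

/-- The side `G[X ∪ Y]` of a tripartite graph is a complete bipartite graph. -/
def CompleteSide (G : SimpleGraph V) (X Y : Set V) : Prop :=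
  ∀ x ∈ X, ∀ y ∈ Y, G.Adj x y

/-- `W` is a vertex cover of the subgraph edge-induced by the edge set `Y`. -/
def CoversEdges (W : Set V) (Y : Set (Sym2 V)) : Prop :=
  ∀ e ∈ Y, ∃ v ∈ W, v ∈ e

/-- `M` is a matching consisting of edges from the edge set `F`:
the edges of `M` are pairwise vertex-disjoint. -/
def IsMatchingIn (F : Set (Sym2 V)) (M : Set (Sym2 V)) : Prop :=
  M ⊆ F ∧ M.Pairwise fun e f => ∀ v, v ∈ e → v ∉ f

section MaoChengAuxSection

namespace MaoChengAux
open Finset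

variable {V : Type*} [DecidableEq V]

def eCard (E : Finset (V × V)) (X Y : Finset V) : ℕ :=
  (E.filter (fun e => e.1 ∈ X ∧ e.2 ∈ Y)).card

def fval (E : Finset (V × V)) (d : V → ℕ) (B C X Y : Finset V) : ℕ :=
  eCard E X Y + ∑ b ∈ B \ X, d b + ∑ c ∈ C \ Y, d c

lemma eCard_insert_left {E : Finset (V × V)} {X Y : Finset V} {b : V} (hb : b ∉ X) :
    eCard E (insert b X) Y = eCard E X Y + eCard E {b} Y := by
  simp only [eCard, Finset.card_filter, ← Finset.sum_add_distrib]
  refine Finset.sum_congr rfl fun e _ => ?_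
  by_cases h1 : e.1 = b <;> by_cases h2 : e.1 ∈ X <;> by_cases h3 : e.2 ∈ Y <;>
    simp_all [Finset.mem_insert]

lemma eCard_insert_right {E : Finset (V × V)} {X Y : Finset V} {c : V} (hc : c ∉ Y) :
    eCard E X (insert c Y) = eCard E X Y + eCard E X {c} := by
  simp only [eCard, Finset.card_filter, ← Finset.sum_add_distrib]
  refine Finset.sum_congr rfl fun e _ => ?_
  by_cases h1 : e.2 = c <;> by_cases h2 : e.2 ∈ Y <;> by_cases h3 : e.1 ∈ X <;>
    simp_all [Finset.mem_insert]

lemma fval_insert_left {E : Finset (V × V)} {d : V → ℕ} {B C X Y : Finset V} {b : V}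
    (hbB : b ∈ B) (hbX : b ∉ X) :
    fval E d B C (insert b X) Y + d b = fval E d B C X Y + eCard E {b} Y := by
  unfold fval
  rw [eCard_insert_left hbX]
  have h1 : B \ X = insert b (B \ insert b X) := by
    ext x
    by_cases hx : x = b <;> simp_all [Finset.mem_sdiff, Finset.mem_insert]
  have h2 : b ∉ B \ insert b X := by simp
  rw [h1, Finset.sum_insert h2]
  ring

lemma fval_insert_right {E : Finset (V × V)} {d : V → ℕ} {B C X Y : Finset V} {c : V}
    (hcC : c ∈ C) (hcY : c ∉ Y) :
    fval E d B C X (insert c Y) + d c = fval E d B C X Y + eCard E X {c} := by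
  unfold fval
  rw [eCard_insert_right hcY]
  have h1 : C \ Y = insert c (C \ insert c Y) := by
    ext x
    by_cases hx : x = c <;> simp_all [Finset.mem_sdiff, Finset.mem_insert]
  have h2 : c ∉ C \ insert c Y := by simp
  rw [h1, Finset.sum_insert h2]
  ring

lemma fval_submod {E : Finset (V × V)} {d : V → ℕ} {B C X₁ X₂ Y₁ Y₂ : Finset V} :
    fval E d B C (X₁ ∩ X₂) (Y₁ ∪ Y₂) + fval E d B C (X₁ ∪ X₂) (Y₁ ∩ Y₂) ≤
      fval E d B C X₁ Y₁ + fval E d B C X₂ Y₂ := by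
  unfold fval
  have he : eCard E (X₁ ∩ X₂) (Y₁ ∪ Y₂) + eCard E (X₁ ∪ X₂) (Y₁ ∩ Y₂) ≤
      eCard E X₁ Y₁ + eCard E X₂ Y₂ := by
    simp only [eCard, Finset.card_filter, ← Finset.sum_add_distrib]
    refine Finset.sum_le_sum fun e _ => ?_
    by_cases h1 : e.1 ∈ X₁ <;> by_cases h2 : e.1 ∈ X₂ <;> by_cases h3 : e.2 ∈ Y₁ <;>
      by_cases h4 : e.2 ∈ Y₂ <;> simp [h1, h2, h3, h4, Finset.mem_inter, Finset.mem_union]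
  have hb : ∑ x ∈ B \ (X₁ ∩ X₂), d x + ∑ x ∈ B \ (X₁ ∪ X₂), d x =
      ∑ x ∈ B \ X₁, d x + ∑ x ∈ B \ X₂, d x := by
    have e1 : B \ (X₁ ∩ X₂) = (B \ X₁) ∪ (B \ X₂) := by ext x; simp; tauto
    have e2 : B \ (X₁ ∪ X₂) = (B \ X₁) ∩ (B \ X₂) := by ext x; simp; tauto
    rw [e1, e2, Finset.sum_union_inter]
  have hc : ∑ x ∈ C \ (Y₁ ∪ Y₂), d x + ∑ x ∈ C \ (Y₁ ∩ Y₂), d x =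
      ∑ x ∈ C \ Y₁, d x + ∑ x ∈ C \ Y₂, d x := by
    have e1 : C \ (Y₁ ∩ Y₂) = (C \ Y₁) ∪ (C \ Y₂) := by ext x; simp; tauto
    have e2 : C \ (Y₁ ∪ Y₂) = (C \ Y₁) ∩ (C \ Y₂) := by ext x; simp; tauto
    rw [e1, e2, add_comm, Finset.sum_union_inter]
  omega




lemma exists_extremal (C : Finset V) (T : Finset (Finset V × Finset V))
    (hT : T.Nonempty)
    (hcl : ∀ q ∈ T, ∀ r ∈ T, (q.1 ∩ r.1, q.2 ∪ r.2) ∈ T)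
    (hsub : ∀ q ∈ T, q.2 ⊆ C) :
    ∃ z ∈ T, ∀ q ∈ T, z.1 ⊆ q.1 ∧ q.2 ⊆ z.2 := by
  obtain ⟨z, hz, hmin⟩ := T.exists_min_image (fun q => q.1.card + (C \ q.2).card) hT
  refine ⟨z, hz, fun q hq => ?_⟩
  have hw := hcl z hz q hq
  have hle := hmin _ hw
  simp only at hle
  have h1 : (z.1 ∩ q.1).card ≤ z.1.card := card_le_card inter_subset_left
  have h2 : (C \ (z.2 ∪ q.2)).card ≤ (C \ z.2).card :=
    card_le_card (sdiff_subset_sdiff (Finset.Subset.refl _) subset_union_left)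
  have e1 : (z.1 ∩ q.1).card = z.1.card := by omega
  have e2 : (C \ (z.2 ∪ q.2)).card = (C \ z.2).card := by omega
  constructor
  · have := Finset.eq_of_subset_of_card_le inter_subset_left (le_of_eq e1.symm)
    rw [Finset.inter_eq_left] at this
    exact this
  · have heq := Finset.eq_of_subset_of_card_le
      (sdiff_subset_sdiff (Finset.Subset.refl C) (subset_union_left (s₁ := z.2) (s₂ := q.2)))
      (le_of_eq e2.symm)
    intro x hx
    by_contra hxz
    have hxC : x ∈ C := hsub q hq hx
    have : x ∈ C \ z.2 := by simp [hxC, hxz]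
    rw [← heq] at this
    simp at this
    exact this.2.2 hx


lemma exists_extremal' (B : Finset V) (T : Finset (Finset V × Finset V))
    (hT : T.Nonempty)
    (hcl : ∀ q ∈ T, ∀ r ∈ T, (q.1 ∪ r.1, q.2 ∩ r.2) ∈ T)
    (hsub : ∀ q ∈ T, q.1 ⊆ B) :
    ∃ z ∈ T, ∀ q ∈ T, q.1 ⊆ z.1 ∧ z.2 ⊆ q.2 := by
  obtain ⟨z, hz, hmin⟩ := T.exists_min_image (fun q => (B \ q.1).card + q.2.card) hT
  refine ⟨z, hz, fun q hq => ?_⟩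
  have hw := hcl z hz q hq
  have hle := hmin _ hw
  simp only at hle
  have h1 : (z.2 ∩ q.2).card ≤ z.2.card := card_le_card inter_subset_left
  have h2 : (B \ (z.1 ∪ q.1)).card ≤ (B \ z.1).card :=
    card_le_card (sdiff_subset_sdiff (Finset.Subset.refl _) subset_union_left)
  have e1 : (z.2 ∩ q.2).card = z.2.card := by omega
  have e2 : (B \ (z.1 ∪ q.1)).card = (B \ z.1).card := by omega
  constructor
  · have heq := Finset.eq_of_subset_of_card_le
      (sdiff_subset_sdiff (Finset.Subset.refl B) (subset_union_left (s₁ := z.1) (s₂ := q.1)))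
      (le_of_eq e2.symm)
    intro x hx
    by_contra hxz
    have hxB : x ∈ B := hsub q hq hx
    have : x ∈ B \ z.1 := by simp [hxB, hxz]
    rw [← heq] at this
    simp at this
    exact this.2.2 hx
  · have := Finset.eq_of_subset_of_card_le inter_subset_left (le_of_eq e1.symm)
    rw [Finset.inter_eq_left] at this
    exact this





lemma fval_erase_left {E : Finset (V × V)} {d : V → ℕ} {B C X Y : Finset V} {b : V}
    (hXB : X ⊆ B) (hb : b ∈ X) :
    fval E d B C (X.erase b) Y + eCard E {b} Y = fval E d B C X Y + d b := by
  have h := fval_insert_left (E := E) (d := d) (B := B) (C := C) (Y := Y)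
    (X := X.erase b) (hXB hb) (notMem_erase b X)
  rw [insert_erase hb] at h
  omega

lemma fval_erase_right {E : Finset (V × V)} {d : V → ℕ} {B C X Y : Finset V} {c : V}
    (hYC : Y ⊆ C) (hc : c ∈ Y) :
    fval E d B C X (Y.erase c) + eCard E X {c} = fval E d B C X Y + d c := by
  have h := fval_insert_right (E := E) (d := d) (B := B) (C := C) (X := X)
    (Y := Y.erase c) (hYC hc) (notMem_erase c Y)
  rw [insert_erase hc] at h
  omega

lemma exists_good_edge (B C : Finset V) (E : Finset (V × V)) (d : V → ℕ) (t : ℕ)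
    (h : ∀ X ⊆ B, ∀ Y ⊆ C, t + 1 ≤ fval E d B C X Y) :
    ∃ e ∈ E, 1 ≤ d e.1 ∧ 1 ≤ d e.2 ∧
      ∀ X ⊆ B, ∀ Y ⊆ C, fval E d B C X Y = t + 1 → e.1 ∈ X ∨ e.2 ∈ Y := by
  classical
  set T : Finset (Finset V × Finset V) := (B.powerset ×ˢ C.powerset).filter
      (fun q => fval E d B C q.1 q.2 = t + 1) with hTdef
  have memT : ∀ q : Finset V × Finset V,
      q ∈ T ↔ (q.1 ⊆ B ∧ q.2 ⊆ C ∧ fval E d B C q.1 q.2 = t + 1) := by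
    intro q
    simp [hTdef, Finset.mem_filter, Finset.mem_product, and_assoc]
  have hcl1 : ∀ q ∈ T, ∀ r ∈ T, (q.1 ∩ r.1, q.2 ∪ r.2) ∈ T := by
    intro q hq r hr
    rw [memT] at hq hr ⊢
    obtain ⟨hq1, hq2, hq3⟩ := hq
    obtain ⟨hr1, hr2, hr3⟩ := hr
    have m1 : q.1 ∩ r.1 ⊆ B := fun x hx => hq1 (mem_inter.mp hx).1
    have m2 : q.2 ∪ r.2 ⊆ C := union_subset hq2 hr2
    have m3 : q.1 ∪ r.1 ⊆ B := union_subset hq1 hr1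
    have m4 : q.2 ∩ r.2 ⊆ C := fun x hx => hq2 (mem_inter.mp hx).1
    have s1 := h _ m1 _ m2
    have s2 := h _ m3 _ m4
    have s3 := fval_submod (E := E) (d := d) (B := B) (C := C)
      (X₁ := q.1) (X₂ := r.1) (Y₁ := q.2) (Y₂ := r.2)
    refine ⟨m1, m2, ?_⟩
    dsimp only
    omega
  have hcl2 : ∀ q ∈ T, ∀ r ∈ T, (q.1 ∪ r.1, q.2 ∩ r.2) ∈ T := by
    intro q hq r hr
    rw [memT] at hq hr ⊢
    obtain ⟨hq1, hq2, hq3⟩ := hq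
    obtain ⟨hr1, hr2, hr3⟩ := hr
    have m1 : q.1 ∩ r.1 ⊆ B := fun x hx => hq1 (mem_inter.mp hx).1
    have m2 : q.2 ∪ r.2 ⊆ C := union_subset hq2 hr2
    have m3 : q.1 ∪ r.1 ⊆ B := union_subset hq1 hr1
    have m4 : q.2 ∩ r.2 ⊆ C := fun x hx => hq2 (mem_inter.mp hx).1
    have s1 := h _ m1 _ m2
    have s2 := h _ m3 _ m4
    have s3 := fval_submod (E := E) (d := d) (B := B) (C := C)
      (X₁ := q.1) (X₂ := r.1) (Y₁ := q.2) (Y₂ := r.2)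
    refine ⟨m3, m4, ?_⟩
    dsimp only
    omega
  rcases T.eq_empty_or_nonempty with hTe | hTne
  · -- no tight pairs
    have hXB : B.filter (fun v => d v ≠ 0) ⊆ B := filter_subset _ _
    have hYC : C.filter (fun v => d v ≠ 0) ⊆ C := filter_subset _ _
    have hs1 : ∑ x ∈ B \ B.filter (fun v => d v ≠ 0), d x = 0 := by
      refine Finset.sum_eq_zero fun x hx => ?_
      rw [mem_sdiff, mem_filter] at hx
      by_contra hne
      exact hx.2 ⟨hx.1, hne⟩
    have hs2 : ∑ x ∈ C \ C.filter (fun v => d v ≠ 0), d x = 0 := by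
      refine Finset.sum_eq_zero fun x hx => ?_
      rw [mem_sdiff, mem_filter] at hx
      by_contra hne
      exact hx.2 ⟨hx.1, hne⟩
    have h1 := h _ hXB _ hYC
    unfold fval at h1
    rw [hs1, hs2] at h1
    have h2 : 0 < eCard E (B.filter (fun v => d v ≠ 0)) (C.filter (fun v => d v ≠ 0)) := by
      omega
    rw [eCard, Finset.card_pos] at h2
    obtain ⟨e, he⟩ := h2
    rw [mem_filter] at he
    refine ⟨e, he.1, ?_, ?_, ?_⟩
    · have := (mem_filter.mp he.2.1).2; omega
    · have := (mem_filter.mp he.2.2).2; omega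
    · intro X hX Y hY htight
      exfalso
      have : (X, Y) ∈ T := (memT _).mpr ⟨hX, hY, htight⟩
      rw [hTe] at this
      exact absurd this (notMem_empty _)
  · obtain ⟨z, hzT, hzmin⟩ := exists_extremal C T hTne hcl1
      (fun q hq => ((memT q).mp hq).2.1)
    obtain ⟨hz1, hz2, hz3⟩ := (memT z).mp hzT
    by_cases hA : 1 ≤ eCard E z.1 z.2
    · -- an edge inside the minimal tight pair
      have hA' : (E.filter (fun e => e.1 ∈ z.1 ∧ e.2 ∈ z.2)).Nonempty := Finset.card_pos.mp hA
      obtain ⟨e, he⟩ := hA'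
      rw [mem_filter] at he
      obtain ⟨heE, he1, he2⟩ := he
      have k1 := fval_erase_left (E := E) (d := d) (C := C) (Y := z.2) hz1 he1
      have k2 := h (z.1.erase e.1) ((erase_subset _ _).trans hz1) z.2 hz2
      have k3 : 1 ≤ eCard E {e.1} z.2 :=
        Finset.card_pos.mpr ⟨e, mem_filter.mpr ⟨heE, Finset.mem_singleton_self _, he2⟩⟩
      have hd1 : 1 ≤ d e.1 := by omega
      have k1' := fval_erase_right (E := E) (d := d) (B := B) (X := z.1) hz2 he2
      have k2' := h z.1 hz1 (z.2.erase e.2) ((erase_subset _ _).trans hz2)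
      have k3' : 1 ≤ eCard E z.1 {e.2} :=
        Finset.card_pos.mpr ⟨e, mem_filter.mpr ⟨heE, he1, Finset.mem_singleton_self _⟩⟩
      have hd2 : 1 ≤ d e.2 := by omega
      exact ⟨e, heE, hd1, hd2, fun X hX Y hY htight =>
        Or.inl ((hzmin (X, Y) ((memT _).mpr ⟨hX, hY, htight⟩)).1 he1)⟩
    · by_cases hB2 : ∃ c ∈ C \ z.2, 1 ≤ d c
      · obtain ⟨cs, hcs, hdcs⟩ := hB2
        rw [mem_sdiff] at hcs
        have k := fval_insert_right (E := E) (d := d) (B := B) (X := z.1) hcs.1 hcs.2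
        have k2 := h _ hz1 _ (insert_subset hcs.1 hz2)
        have hec : 1 ≤ eCard E z.1 {cs} := by omega
        obtain ⟨e, he⟩ := Finset.card_pos.mp hec
        rw [mem_filter] at he
        obtain ⟨heE, he1, he2⟩ := he
        rw [Finset.mem_singleton] at he2
        have hd1 : 1 ≤ d e.1 := by
          by_contra h0
          have h0' : d e.1 = 0 := by omega
          have k1 := fval_erase_left (E := E) (d := d) (C := C) (Y := z.2) hz1 he1
          have k2' := h (z.1.erase e.1) ((erase_subset _ _).trans hz1) z.2 hz2
          have htt : (z.1.erase e.1, z.2) ∈ T :=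
            (memT _).mpr ⟨(erase_subset _ _).trans hz1, hz2, by dsimp only; omega⟩
          have := (hzmin _ htt).1 he1
          exact absurd this (notMem_erase _ _)
        refine ⟨e, heE, hd1, by rw [he2]; exact hdcs, fun X hX Y hY htight =>
          Or.inl ((hzmin (X, Y) ((memT _).mpr ⟨hX, hY, htight⟩)).1 he1)⟩
      · -- all capacity outside lies on the B side
        push_neg at hB2
        have hs2 : ∑ x ∈ C \ z.2, d x = 0 :=
          Finset.sum_eq_zero fun x hx => by have := hB2 x hx; omega
        have hsum : 1 ≤ ∑ x ∈ B \ z.1, d x := by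
          have := hz3
          unfold fval at this
          omega
        have hex : ∃ x ∈ B \ z.1, d x ≠ 0 :=
          Finset.exists_ne_zero_of_sum_ne_zero (by omega)
        obtain ⟨bs, hbs, hdbs⟩ := hex
        rw [mem_sdiff] at hbs
        set T' := T.filter (fun q => bs ∉ q.1) with hT'def
        have hzT' : z ∈ T' := mem_filter.mpr ⟨hzT, hbs.2⟩
        have hcl' : ∀ q ∈ T', ∀ r ∈ T', (q.1 ∪ r.1, q.2 ∩ r.2) ∈ T' := by
          intro q hq r hr
          rw [mem_filter] at hq hr ⊢
          refine ⟨hcl2 _ hq.1 _ hr.1, ?_⟩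
          simp only [mem_union]
          rintro (hc | hc)
          · exact hq.2 hc
          · exact hr.2 hc
        obtain ⟨w, hwT', hwmax⟩ := exists_extremal' B T' ⟨z, hzT'⟩ hcl'
          (fun q hq => ((memT q).mp (mem_filter.mp hq).1).1)
        have hwT := (mem_filter.mp hwT').1
        obtain ⟨hw1, hw2, hw3⟩ := (memT w).mp hwT
        have hbw : bs ∉ w.1 := (mem_filter.mp hwT').2
        have k := fval_insert_left (E := E) (d := d) (C := C) (Y := w.2) hbs.1 hbw
        have k2 := h _ (insert_subset hbs.1 hw1) _ hw2
        have hec : 1 ≤ eCard E {bs} w.2 := by omega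
        obtain ⟨e, he⟩ := Finset.card_pos.mp hec
        rw [mem_filter] at he
        obtain ⟨heE, he1, he2⟩ := he
        rw [Finset.mem_singleton] at he1
        have hd2 : 1 ≤ d e.2 := by
          by_contra h0
          have h0' : d e.2 = 0 := by omega
          have k1 := fval_erase_right (E := E) (d := d) (B := B) (X := w.1) hw2 he2
          have k2' := h w.1 hw1 (w.2.erase e.2) ((erase_subset _ _).trans hw2)
          have htt : (w.1, w.2.erase e.2) ∈ T' := mem_filter.mpr
            ⟨(memT _).mpr ⟨hw1, (erase_subset _ _).trans hw2, by dsimp only; omega⟩, hbw⟩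
          have := (hwmax _ htt).2 he2
          exact absurd this (notMem_erase _ _)
        refine ⟨e, heE, by rw [he1]; omega, hd2, ?_⟩
        intro X hX Y hY htight
        by_cases hbX : bs ∈ X
        · exact Or.inl (by rw [he1]; exact hbX)
        · have hXYT' : (X, Y) ∈ T' :=
            mem_filter.mpr ⟨(memT _).mpr ⟨hX, hY, htight⟩, hbX⟩
          exact Or.inr ((hwmax _ hXYT').2 he2)





theorem exists_deg_subgraph (B C : Finset V) (hBC : Disjoint B C) :
    ∀ (t : ℕ) (E : Finset (V × V)) (d : V → ℕ), (∀ e ∈ E, e.1 ∈ B ∧ e.2 ∈ C) →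
    (∀ X ⊆ B, ∀ Y ⊆ C, t ≤ fval E d B C X Y) →
    ∃ F ⊆ E, F.card = t ∧ ∀ v, (F.filter (fun e => v = e.1 ∨ v = e.2)).card ≤ d v := by
  intro t
  induction t with
  | zero => exact fun E d hE h => ⟨∅, empty_subset _, card_empty, by simp⟩
  | succ t ih =>
    intro E d hE h
    obtain ⟨e, heE, hd1, hd2, hsel⟩ := exists_good_edge B C E d t h
    have hbB : e.1 ∈ B := (hE e heE).1
    have hcC : e.2 ∈ C := (hE e heE).2
    have hbc : e.1 ≠ e.2 := fun hh => (Finset.disjoint_left.mp hBC hbB) (hh ▸ hcC)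
    set d' : V → ℕ := fun v => if v = e.1 ∨ v = e.2 then d v - 1 else d v with hd'def
    have key : ∀ X ⊆ B, ∀ Y ⊆ C, fval E d B C X Y = fval (E.erase e) d' B C X Y +
        ((if e.1 ∈ X ∧ e.2 ∈ Y then 1 else 0) + (if e.1 ∈ X then 0 else 1) +
          (if e.2 ∈ Y then 0 else 1)) := by
      intro X hX Y hY
      have hE1 : eCard E X Y = eCard (E.erase e) X Y + (if e.1 ∈ X ∧ e.2 ∈ Y then 1 else 0) := by
        unfold eCard
        conv_lhs => rw [(Finset.insert_erase heE).symm]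
        rw [Finset.filter_insert]
        by_cases hc : e.1 ∈ X ∧ e.2 ∈ Y
        · rw [if_pos hc, if_pos hc, card_insert_of_notMem
            (fun hm => notMem_erase e E (mem_of_mem_filter e hm))]
        · rw [if_neg hc, if_neg hc, add_zero]
      have hB1 : ∑ x ∈ B \ X, d x = ∑ x ∈ B \ X, d' x + (if e.1 ∈ X then 0 else 1) := by
        have hpt : ∀ x ∈ B \ X, d x = d' x + (if x = e.1 then 1 else 0) := by
          intro x hx
          rw [mem_sdiff] at hx
          by_cases h1 : x = e.1
          · rw [if_pos h1, hd'def]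
            simp only [h1, true_or, if_pos]
            omega
          · have h2 : x ≠ e.2 := fun hh => (Finset.disjoint_left.mp hBC hx.1) (hh ▸ hcC)
            rw [if_neg h1, hd'def]
            simp [h1, h2]
        rw [Finset.sum_congr rfl hpt, Finset.sum_add_distrib, Finset.sum_ite_eq' (B \ X) e.1 (fun _ => 1)]
        simp only [mem_sdiff, hbB, true_and]
        by_cases hbX : e.1 ∈ X <;> simp [hbX]
      have hC1 : ∑ x ∈ C \ Y, d x = ∑ x ∈ C \ Y, d' x + (if e.2 ∈ Y then 0 else 1) := by
        have hpt : ∀ x ∈ C \ Y, d x = d' x + (if x = e.2 then 1 else 0) := by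
          intro x hx
          rw [mem_sdiff] at hx
          by_cases h1 : x = e.2
          · rw [if_pos h1, hd'def]
            simp only [h1, or_true, if_pos]
            omega
          · have h2 : x ≠ e.1 := fun hh => (Finset.disjoint_left.mp hBC (hh ▸ hbB)) hx.1
            rw [if_neg h1, hd'def]
            simp [h1, h2]
        rw [Finset.sum_congr rfl hpt, Finset.sum_add_distrib, Finset.sum_ite_eq' (C \ Y) e.2 (fun _ => 1)]
        simp only [mem_sdiff, hcC, true_and]
        by_cases hcY : e.2 ∈ Y <;> simp [hcY]
      unfold fval
      omega
    have hyp' : ∀ X ⊆ B, ∀ Y ⊆ C, t ≤ fval (E.erase e) d' B C X Y := by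
      intro X hX Y hY
      have h1 := h X hX Y hY
      have hkey := key X hX Y hY
      by_cases hbX : e.1 ∈ X
      · simp only [hbX, if_true] at hkey
        by_cases hcY : e.2 ∈ Y <;> simp only [hcY, if_true, if_neg, and_true, and_false,
          if_false] at hkey <;> omega
      · by_cases hcY : e.2 ∈ Y
        · simp only [hbX, hcY, and_true, and_false, if_true, if_false, if_neg,
            not_false_iff] at hkey
          omega
        · have hnt : fval E d B C X Y ≠ t + 1 := by
            intro hh
            rcases hsel X hX Y hY hh with hc | hc
            · exact hbX hc
            · exact hcY hc
          simp only [hbX, hcY, and_false, false_and, if_false, if_neg, not_false_iff] at hkey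
          omega
    obtain ⟨F', hF'E, hcard, hdeg⟩ := ih (E.erase e) d'
      (fun e' he' => hE e' (mem_of_mem_erase he')) hyp'
    have heF' : e ∉ F' := fun hm => (notMem_erase e E) (hF'E hm)
    refine ⟨insert e F', ?_, ?_, ?_⟩
    · exact insert_subset heE (hF'E.trans (erase_subset _ _))
    · rw [card_insert_of_notMem heF', hcard]
    · intro v
      by_cases hv : v = e.1 ∨ v = e.2
      · rw [filter_insert, if_pos hv, card_insert_of_notMem
          (fun hm => heF' (mem_of_mem_filter e hm))]
        have hdv := hdeg v
        rw [hd'def] at hdv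
        simp only [hv, if_pos] at hdv
        have : 1 ≤ d v := by rcases hv with h1 | h1 <;> rw [h1] <;> assumption
        omega
      · rw [filter_insert, if_neg hv]
        have hdv := hdeg v
        rw [hd'def] at hdv
        simp only [hv, if_neg, not_false_iff] at hdv
        exact hdv



theorem exists_completion {ι : Type*} [Fintype ι] [DecidableEq ι] (p : ℕ) :
    ∀ (N : ℕ) (m : ι → ι → ℕ), (∀ i, ∑ j, m i j ≤ p) → (∀ j, ∑ i, m i j ≤ p) →
    (p * Fintype.card ι - ∑ i, ∑ j, m i j ≤ N) →
    ∃ m' : ι → ι → ℕ, (∀ i j, m i j ≤ m' i j) ∧ (∀ i, ∑ j, m' i j = p) ∧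
      (∀ j, ∑ i, m' i j = p) := by
  intro N
  induction N with
  | zero =>
    intro m hr hc hN
    have htot : ∑ i, ∑ j, m i j ≤ p * Fintype.card ι := by
      calc ∑ i, ∑ j, m i j ≤ ∑ _i : ι, p := Finset.sum_le_sum fun i _ => hr i
      _ = p * Fintype.card ι := by rw [Finset.sum_const, card_univ, smul_eq_mul, mul_comm]
    have htot' : ∑ i, ∑ j, m i j = p * Fintype.card ι := by omega
    refine ⟨m, fun i j => le_refl _, fun i => ?_, fun j => ?_⟩
    · by_contra hi
      have hlt : ∑ j, m i j < p := lt_of_le_of_ne (hr i) hi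
      have : ∑ i, ∑ j, m i j < ∑ _i : ι, p :=
        Finset.sum_lt_sum (fun i _ => hr i) ⟨i, mem_univ i, hlt⟩
      rw [Finset.sum_const, card_univ, smul_eq_mul, mul_comm] at this
      omega
    · by_contra hj
      have hlt : ∑ i, m i j < p := lt_of_le_of_ne (hc j) hj
      have h2 : ∑ j, ∑ i, m i j < ∑ _j : ι, p :=
        Finset.sum_lt_sum (fun j _ => hc j) ⟨j, mem_univ j, hlt⟩
      rw [Finset.sum_const, card_univ, smul_eq_mul, mul_comm, Finset.sum_comm] at h2
      omega
  | succ N ihN =>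
    intro m hr hc hN
    by_cases hall : ∀ i, ∑ j, m i j = p
    · have htot' : ∑ i, ∑ j, m i j = p * Fintype.card ι := by
        rw [Finset.sum_congr rfl (fun i _ => hall i), Finset.sum_const, card_univ,
          smul_eq_mul, mul_comm]
      refine ⟨m, fun i j => le_refl _, hall, fun j => ?_⟩
      by_contra hj
      have hlt : ∑ i, m i j < p := lt_of_le_of_ne (hc j) hj
      have h2 : ∑ j, ∑ i, m i j < ∑ _j : ι, p :=
        Finset.sum_lt_sum (fun j _ => hc j) ⟨j, mem_univ j, hlt⟩
      rw [Finset.sum_const, card_univ, smul_eq_mul, mul_comm, Finset.sum_comm] at h2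
      omega
    · push_neg at hall
      obtain ⟨i0, hi0⟩ := hall
      have hi0' : ∑ j, m i0 j < p := lt_of_le_of_ne (hr i0) hi0
      have hex : ∃ j0, ∑ i, m i j0 < p := by
        by_contra hco
        push_neg at hco
        have hco' : ∀ j, ∑ i, m i j = p := fun j => le_antisymm (hc j) (hco j)
        have h1 : ∑ i, ∑ j, m i j = p * Fintype.card ι := by
          rw [Finset.sum_comm, Finset.sum_congr rfl (fun j _ => hco' j),
            Finset.sum_const, card_univ, smul_eq_mul, mul_comm]
        have h2 : ∑ i, ∑ j, m i j < p * Fintype.card ι := by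
          calc ∑ i, ∑ j, m i j < ∑ _i : ι, p :=
            Finset.sum_lt_sum (fun i _ => hr i) ⟨i0, mem_univ i0, hi0'⟩
          _ = p * Fintype.card ι := by rw [Finset.sum_const, card_univ, smul_eq_mul, mul_comm]
        omega
      obtain ⟨j0, hj0⟩ := hex
      set m1 : ι → ι → ℕ := fun i j => m i j + (if i = i0 ∧ j = j0 then 1 else 0) with hm1
      have hrow1 : ∀ i, ∑ j, m1 i j = ∑ j, m i j + (if i = i0 then 1 else 0) := by
        intro i
        rw [hm1]
        simp only
        rw [Finset.sum_add_distrib]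
        congr 1
        by_cases hi : i = i0
        · simp [hi, Finset.sum_ite_eq' Finset.univ j0 (fun _ => 1)]
        · simp [hi]
      have hcol1 : ∀ j, ∑ i, m1 i j = ∑ i, m i j + (if j = j0 then 1 else 0) := by
        intro j
        rw [hm1]
        simp only
        rw [Finset.sum_add_distrib]
        congr 1
        by_cases hj : j = j0
        · simp [hj, Finset.sum_ite_eq' Finset.univ i0 (fun _ => 1)]
        · simp [hj]
      have hr1 : ∀ i, ∑ j, m1 i j ≤ p := by
        intro i
        rw [hrow1]
        by_cases hi : i = i0
        · rw [if_pos hi, hi]; omega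
        · rw [if_neg hi]; simpa using hr i
      have hc1 : ∀ j, ∑ i, m1 i j ≤ p := by
        intro j
        rw [hcol1]
        by_cases hj : j = j0
        · rw [if_pos hj, hj]; omega
        · rw [if_neg hj]; simpa using hc j
      have htot1 : ∑ i, ∑ j, m1 i j = (∑ i, ∑ j, m i j) + 1 := by
        rw [Finset.sum_congr rfl (fun i (_ : i ∈ univ) => hrow1 i), Finset.sum_add_distrib,
          Finset.sum_ite_eq' Finset.univ i0 (fun _ => 1)]
        simp
      obtain ⟨m', hle, hre, hce⟩ := ihN m1 hr1 hc1 (by omega)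
      exact ⟨m', fun i j => le_trans (by rw [hm1]; simp only; omega) (hle i j), hre, hce⟩

theorem exists_decomp {ι : Type*} [Fintype ι] [DecidableEq ι] :
    ∀ (p : ℕ) (m : ι → ι → ℕ), (∀ i, ∑ j, m i j = p) → (∀ j, ∑ i, m i j = p) →
    ∃ f : Fin p → ι → ι, (∀ k, Function.Injective (f k)) ∧
      ∀ i j, m i j ≤ (Finset.univ.filter (fun k => f k i = j)).card := by
  intro p
  induction p with
  | zero =>
    intro m hr _hc
    refine ⟨fun k => k.elim0, fun k => k.elim0, fun i j => ?_⟩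
    have h0 : m i j = 0 := by
      have := hr i
      have h1 : m i j ≤ ∑ j, m i j := Finset.single_le_sum (fun _ _ => Nat.zero_le _) (mem_univ j)
      omega
    omega
  | succ p ih =>
    intro m hr hc
    -- Hall's condition
    have hall : ∀ s : Finset ι,
        s.card ≤ (s.biUnion (fun i => univ.filter (fun j => 1 ≤ m i j))).card := by
      intro s
      set t : ι → Finset ι := fun i => univ.filter (fun j => 1 ≤ m i j) with ht
      have key : (p + 1) * s.card ≤ (p + 1) * (s.biUnion t).card := by
        calc (p + 1) * s.card = ∑ i ∈ s, (p + 1) := by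
              rw [Finset.sum_const, smul_eq_mul, mul_comm]
          _ = ∑ i ∈ s, ∑ j, m i j := by
              refine Finset.sum_congr rfl fun i _ => (hr i).symm
          _ = ∑ i ∈ s, ∑ j ∈ s.biUnion t, m i j := by
              refine Finset.sum_congr rfl fun i hi => ?_
              refine (Finset.sum_subset (subset_univ _) fun j _ hj => ?_).symm
              by_contra hne
              exact hj (Finset.mem_biUnion.mpr ⟨i, hi, by
                rw [ht]; simp only [mem_filter, mem_univ, true_and]; omega⟩)
          _ = ∑ j ∈ s.biUnion t, ∑ i ∈ s, m i j := Finset.sum_comm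
          _ ≤ ∑ j ∈ s.biUnion t, ∑ i, m i j :=
              Finset.sum_le_sum fun j _ => Finset.sum_le_sum_of_subset (subset_univ s)
          _ = ∑ j ∈ s.biUnion t, (p + 1) := Finset.sum_congr rfl fun j _ => hc j
          _ = (p + 1) * (s.biUnion t).card := by rw [Finset.sum_const, smul_eq_mul, mul_comm]
      exact Nat.le_of_mul_le_mul_left key (Nat.succ_pos p)
    obtain ⟨g, ginj, hgmem⟩ :=
      (Finset.all_card_le_biUnion_card_iff_exists_injective
        (fun i => univ.filter (fun j => 1 ≤ m i j))).mp hall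
    have hg1 : ∀ i, 1 ≤ m i (g i) := fun i => (mem_filter.mp (hgmem i)).2
    have gbij : Function.Bijective g := Finite.injective_iff_bijective.mp ginj
    set e : ι ≃ ι := Equiv.ofBijective g gbij with he
    set m' : ι → ι → ℕ := fun i j => m i j - (if g i = j then 1 else 0) with hm'
    have hpt : ∀ i j, m' i j + (if g i = j then 1 else 0) = m i j := by
      intro i j
      rw [hm']
      simp only
      by_cases hgij : g i = j
      · simp only [if_pos hgij]
        have := hg1 i
        rw [hgij] at this
        omega
      · simp [hgij]
    have hr' : ∀ i, ∑ j, m' i j = p := by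
      intro i
      have h1 : ∑ j, m' i j + ∑ j, (if g i = j then 1 else 0) = ∑ j, m i j := by
        rw [← Finset.sum_add_distrib]
        exact Finset.sum_congr rfl fun j _ => hpt i j
      rw [Finset.sum_ite_eq Finset.univ (g i) (fun _ => 1)] at h1
      simp only [mem_univ, if_true] at h1
      have := hr i
      omega
    have hc' : ∀ j, ∑ i, m' i j = p := by
      intro j
      have h1 : ∑ i, m' i j + ∑ i, (if g i = j then 1 else 0) = ∑ i, m i j := by
        rw [← Finset.sum_add_distrib]
        exact Finset.sum_congr rfl fun i _ => hpt i j
      have h2 : ∑ i, (if g i = j then 1 else 0) = 1 := by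
        have hcong : ∀ i : ι, (if g i = j then (1 : ℕ) else 0) = (if i = e.symm j then 1 else 0) := by
          intro i
          by_cases hi : i = e.symm j
          · rw [if_pos hi, if_pos]
            rw [hi]
            exact e.apply_symm_apply j
          · rw [if_neg hi, if_neg]
            intro hgij
            exact hi (by
              have : e i = j := hgij
              rw [← this]; exact (e.symm_apply_apply i).symm)
        rw [Finset.sum_congr rfl (fun i _ => hcong i),
          Finset.sum_ite_eq' Finset.univ (e.symm j) (fun _ => 1)]
        simp
      have := hc j
      omega
    obtain ⟨f', hf'inj, hf'cnt⟩ := ih m' hr' hc'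
    refine ⟨(Fin.cons g f' : Fin (p+1) → ι → ι), ?_, ?_⟩
    · intro k
      refine Fin.cases ?_ ?_ k
      · simpa using ginj
      · intro k'
        simpa using hf'inj k'
    · intro i j
      have hcnt : (Finset.univ.filter (fun k : Fin (p+1) => (Fin.cons g f' : Fin (p+1) → ι → ι) k i = j)).card =
          (if g i = j then 1 else 0) +
            (Finset.univ.filter (fun k : Fin p => f' k i = j)).card := by
        rw [Finset.card_filter, Finset.card_filter, Fin.sum_univ_succ]
        simp [Fin.cons_zero, Fin.cons_succ]
      have := hf'cnt i j
      have hptij := hpt i j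
      omega


end MaoChengAux

end MaoChengAuxSection

/-- **(Mao Cheng)** Let `p, t` be positive integers and let `G` be a finite bipartite
graph with parts `B` and `C`. There exist `p` pairwise edge-disjoint matchings in `G`
whose cardinalities sum to `t` if and only if for all `B'' ⊆ B` and all `C'' ⊆ C`,
`|∂(B'') ∩ ∂(C'')| + p·(|B| + |C| − |B''| − |C''|) ≥ t`. -/
theorem maoCheng_matchings_iff [Fintype V] (G : SimpleGraph V)
    (B C : Set V) (hunion : B ∪ C = Set.univ) (hdisj : Disjoint B C)
    (hB : ∀ u ∈ B, ∀ v ∈ B, ¬G.Adj u v) (hC : ∀ u ∈ C, ∀ v ∈ C, ¬G.Adj u v)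
    (p t : ℕ) (hp : 0 < p) (ht : 0 < t) :
    (∃ M : Fin p → Set (Sym2 V),
        (∀ i, IsMatchingIn G.edgeSet (M i)) ∧
        (∀ i j, i ≠ j → Disjoint (M i) (M j)) ∧
        ∑ i, (M i).ncard = t) ↔
      ∀ B'' ⊆ B, ∀ C'' ⊆ C,
        (edgesBetween G B'' C'').ncard +
          p * (B.ncard + C.ncard - B''.ncard - C''.ncard) ≥ t := by
  classical
  have fact_edge : ∀ u v, G.Adj u v → (u ∈ B ∧ v ∈ C) ∨ (u ∈ C ∧ v ∈ B) := by
    intro u v huv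
    have hu : u ∈ B ∪ C := hunion ▸ Set.mem_univ u
    have hv : v ∈ B ∪ C := hunion ▸ Set.mem_univ v
    rcases hu with hu | hu <;> rcases hv with hv | hv
    · exact absurd huv (hB u hu v hv)
    · exact Or.inl ⟨hu, hv⟩
    · exact Or.inr ⟨hu, hv⟩
    · exact absurd huv (hC u hu v hv)
  constructor
  · -- easy direction
    rintro ⟨M, hmatch, hdisjM, hsum⟩ B'' hB'' C'' hC''
    set W := edgesBetween G B'' C'' with hWdef
    have hpart1 : ∑ i, (M i ∩ W).ncard ≤ W.ncard := by
      set A : Fin p → Finset (Sym2 V) := fun i => (Set.toFinite (M i ∩ W)).toFinset with hA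
      have hAcard : ∀ i, (M i ∩ W).ncard = (A i).card := fun i =>
        Set.ncard_eq_toFinset_card _ _
      have hAdisj : ∀ i ∈ Finset.univ, ∀ j ∈ Finset.univ, i ≠ j → Disjoint (A i) (A j) := by
        intro i _ j _ hij
        rw [Finset.disjoint_left]
        intro x hxi hxj
        rw [hA, Set.Finite.mem_toFinset] at hxi hxj
        exact Set.disjoint_left.mp (hdisjM i j hij) hxi.1 hxj.1
      calc ∑ i, (M i ∩ W).ncard = ∑ i, (A i).card := Finset.sum_congr rfl fun i _ => hAcard i
        _ = (Finset.univ.biUnion A).card := (Finset.card_biUnion hAdisj).symm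
        _ ≤ ((Set.toFinite W).toFinset).card := by
            refine Finset.card_le_card ?_
            intro x hx
            rw [Finset.mem_biUnion] at hx
            obtain ⟨i, _, hxi⟩ := hx
            rw [hA, Set.Finite.mem_toFinset] at hxi
            rw [Set.Finite.mem_toFinset]
            exact hxi.2
        _ = W.ncard := (Set.ncard_eq_toFinset_card _ _).symm
    have hpart2 : ∀ i, (M i \ W).ncard ≤ (B \ B'').ncard + (C \ C'').ncard := by
      intro i
      rcases Set.eq_empty_or_nonempty (M i \ W) with hemp | ⟨x0, hx0⟩
      · rw [hemp]
        simp
      · have hne : Nonempty V := by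
          obtain ⟨⟨a, b⟩, _⟩ := Quot.exists_rep x0
          exact ⟨a⟩
      -- every edge not between B'' C'' has an endpoint outside
        have key : ∀ (a b : V), s(a, b) ∈ M i \ W →
            ∃ v, v ∈ s(a, b) ∧ v ∈ (B \ B'') ∪ (C \ C'') := by
          intro a b hab
          have hadj : G.Adj a b := G.mem_edgeSet.mp ((hmatch i).1 hab.1)
          have hnW := hab.2
          rcases fact_edge a b hadj with ⟨haB, hbC⟩ | ⟨haC, hbB⟩
          · by_cases haB'' : a ∈ B''
            · by_cases hbC'' : b ∈ C''
              · exact absurd ⟨(hmatch i).1 hab.1, a, haB'', b, hbC'', rfl⟩ hnW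
              · exact ⟨b, Sym2.mem_iff.mpr (Or.inr rfl), Or.inr ⟨hbC, hbC''⟩⟩
            · exact ⟨a, Sym2.mem_iff.mpr (Or.inl rfl), Or.inl ⟨haB, haB''⟩⟩
          · by_cases hbB'' : b ∈ B''
            · by_cases haC'' : a ∈ C''
              · exact absurd ⟨(hmatch i).1 hab.1, b, hbB'', a, haC'', Sym2.eq_swap.symm⟩ hnW
              · exact ⟨a, Sym2.mem_iff.mpr (Or.inl rfl), Or.inr ⟨haC, haC''⟩⟩
            · exact ⟨b, Sym2.mem_iff.mpr (Or.inr rfl), Or.inl ⟨hbB, hbB''⟩⟩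
        have hP : ∀ x ∈ M i \ W, ∃ v, v ∈ x ∧ v ∈ (B \ B'') ∪ (C \ C'') := by
          intro x
          induction x using Sym2.ind with
          | _ a b => exact key a b
        set f : Sym2 V → V := fun x =>
          if h : ∃ v, v ∈ x ∧ v ∈ (B \ B'') ∪ (C \ C'') then h.choose else hne.some with hf
        have hmaps : ∀ x ∈ M i \ W, f x ∈ (B \ B'') ∪ (C \ C'') := by
          intro x hx
          have hex := hP x hx
          rw [hf]
          simp only [dif_pos hex]
          exact hex.choose_spec.2
        have hmem : ∀ x ∈ M i \ W, f x ∈ x := by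
          intro x hx
          have hex := hP x hx
          rw [hf]
          simp only [dif_pos hex]
          exact hex.choose_spec.1
        have hinj : Set.InjOn f (M i \ W) := by
          intro x hx y hy hxy
          by_contra hne'
          have := (hmatch i).2 hx.1 hy.1 hne' (f x) (hmem x hx)
          exact this (hxy ▸ hmem y hy)
        calc (M i \ W).ncard ≤ ((B \ B'') ∪ (C \ C'')).ncard :=
              Set.ncard_le_ncard_of_injOn f hmaps hinj
          _ = (B \ B'').ncard + (C \ C'').ncard :=
              Set.ncard_union_eq (Disjoint.mono Set.diff_subset Set.diff_subset hdisj)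
    have hBd : (B \ B'').ncard = B.ncard - B''.ncard := Set.ncard_diff hB''
    have hCd : (C \ C'').ncard = C.ncard - C''.ncard := Set.ncard_diff hC''
    have hBle : B''.ncard ≤ B.ncard := Set.ncard_le_ncard hB''
    have hCle : C''.ncard ≤ C.ncard := Set.ncard_le_ncard hC''
    have harith : B.ncard + C.ncard - B''.ncard - C''.ncard =
        (B.ncard - B''.ncard) + (C.ncard - C''.ncard) := by omega
    have hchain : t ≤ W.ncard + p * ((B \ B'').ncard + (C \ C'').ncard) := by
      calc t = ∑ i, (M i).ncard := hsum.symm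
        _ = ∑ i, ((M i ∩ W).ncard + (M i \ W).ncard) :=
            Finset.sum_congr rfl fun i _ =>
              (Set.ncard_inter_add_ncard_diff_eq_ncard (M i) W).symm
        _ = ∑ i, (M i ∩ W).ncard + ∑ i, (M i \ W).ncard := Finset.sum_add_distrib
        _ ≤ W.ncard + ∑ _i : Fin p, ((B \ B'').ncard + (C \ C'').ncard) :=
            add_le_add hpart1 (Finset.sum_le_sum fun i _ => hpart2 i)
        _ = W.ncard + p * ((B \ B'').ncard + (C \ C'').ncard) := by
            rw [Finset.sum_const, Finset.card_univ, Fintype.card_fin, smul_eq_mul]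
    rw [ge_iff_le, harith]
    rw [hBd, hCd] at hchain
    exact hchain
  · -- hard direction
    intro hcond
    set Bf : Finset V := Finset.univ.filter (· ∈ B) with hBfdef
    set Cf : Finset V := Finset.univ.filter (· ∈ C) with hCfdef
    have hBfc : (Bf : Set V) = B := by ext x; simp [hBfdef]
    have hCfc : (Cf : Set V) = C := by ext x; simp [hCfdef]
    have hBncard : B.ncard = Bf.card := by rw [← hBfc, Set.ncard_coe_finset]
    have hCncard : C.ncard = Cf.card := by rw [← hCfc, Set.ncard_coe_finset]
    have hBCf : Disjoint Bf Cf := by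
      rw [Finset.disjoint_left]
      intro x hx hy
      rw [hBfdef, Finset.mem_filter] at hx
      rw [hCfdef, Finset.mem_filter] at hy
      exact Set.disjoint_left.mp hdisj hx.2 hy.2
    set E : Finset (V × V) :=
      Finset.univ.filter (fun e : V × V => G.Adj e.1 e.2 ∧ e.1 ∈ B ∧ e.2 ∈ C) with hEdef
    have hEmem : ∀ e : V × V, e ∈ E ↔ G.Adj e.1 e.2 ∧ e.1 ∈ B ∧ e.2 ∈ C := by
      intro e; simp [hEdef]
    have hEB : ∀ X Y : Finset V, (X : Set V) ⊆ B → (Y : Set V) ⊆ C →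
        (edgesBetween G ↑X ↑Y).ncard = MaoChengAux.eCard E X Y := by
      intro X Y hX hY
      have hinj : Set.InjOn (fun e : V × V => s(e.1, e.2))
          ↑(E.filter (fun e => e.1 ∈ X ∧ e.2 ∈ Y)) := by
        intro a ha b hb hab
        simp only [Finset.coe_filter, Set.mem_setOf_eq] at ha hb
        have haB : a.1 ∈ B := hX ha.2.1
        have hbC : b.2 ∈ C := hY hb.2.2
        simp only at hab
        rcases Sym2.eq_iff.mp hab with ⟨h1, h2⟩ | ⟨h1, h2⟩
        · exact Prod.ext h1 h2
        · exact absurd (h1 ▸ hbC) (fun hc => Set.disjoint_left.mp hdisj haB hc)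
      have hset : edgesBetween G ↑X ↑Y =
          ↑((E.filter (fun e => e.1 ∈ X ∧ e.2 ∈ Y)).image (fun e => s(e.1, e.2))) := by
        ext x
        simp only [edgesBetween, Set.mem_setOf_eq, Finset.coe_image, Set.mem_image,
          Finset.mem_coe, Finset.mem_filter]
        constructor
        · rintro ⟨hx, u, hu, w, hw, rfl⟩
          have hadj : G.Adj u w := G.mem_edgeSet.mp hx
          exact ⟨(u, w), ⟨(hEmem _).mpr ⟨hadj, hX hu, hY hw⟩, hu, hw⟩, rfl⟩
        · rintro ⟨e, ⟨heE, heX, heY⟩, rfl⟩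
          have h := (hEmem e).mp heE
          exact ⟨G.mem_edgeSet.mpr h.1, e.1, heX, e.2, heY, rfl⟩
      rw [hset, Set.ncard_coe_finset, Finset.card_image_of_injOn hinj, MaoChengAux.eCard]
    have hyp : ∀ X ⊆ Bf, ∀ Y ⊆ Cf, t ≤ MaoChengAux.fval E (fun _ => p) Bf Cf X Y := by
      intro X hX Y hY
      have hXB : (X : Set V) ⊆ B := hBfc ▸ Finset.coe_subset.mpr hX
      have hYC : (Y : Set V) ⊆ C := hCfc ▸ Finset.coe_subset.mpr hY
      have hc := hcond ↑X hXB ↑Y hYC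
      rw [ge_iff_le, hEB X Y hXB hYC] at hc
      have hXc : (↑X : Set V).ncard = X.card := Set.ncard_coe_finset X
      have hYc : (↑Y : Set V).ncard = Y.card := Set.ncard_coe_finset Y
      have hxle : X.card ≤ Bf.card := Finset.card_le_card hX
      have hyle : Y.card ≤ Cf.card := Finset.card_le_card hY
      have harith : B.ncard + C.ncard - (↑X : Set V).ncard - (↑Y : Set V).ncard =
          (Bf.card - X.card) + (Cf.card - Y.card) := by
        rw [hBncard, hCncard, hXc, hYc]; omega
      rw [harith, Nat.mul_add] at hc
      unfold MaoChengAux.fval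
      rw [Finset.sum_const, Finset.sum_const, Finset.card_sdiff_of_subset hX, Finset.card_sdiff_of_subset hY,
        smul_eq_mul, smul_eq_mul, mul_comm (Bf.card - X.card) p, mul_comm (Cf.card - Y.card) p]
      omega
    obtain ⟨F, hFE, hFcard, hFdeg⟩ := MaoChengAux.exists_deg_subgraph Bf Cf hBCf t E
      (fun _ => p)
      (fun e he => by
        have h := (hEmem e).mp he
        constructor
        · rw [hBfdef, Finset.mem_filter]; exact ⟨Finset.mem_univ _, h.2.1⟩
        · rw [hCfdef, Finset.mem_filter]; exact ⟨Finset.mem_univ _, h.2.2⟩) hyp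
    have hFadj : ∀ e ∈ F, G.Adj e.1 e.2 ∧ e.1 ∈ B ∧ e.2 ∈ C := fun e he =>
      (hEmem e).mp (hFE he)
    set m : V → V → ℕ := fun u v => if (u, v) ∈ F then 1 else 0 with hm
    have hrow : ∀ u, ∑ v, m u v ≤ p := by
      intro u
      have h1 : ∑ v, m u v = (Finset.univ.filter (fun v => (u, v) ∈ F)).card :=
        (Finset.card_filter _ _).symm
      rw [h1]
      refine le_trans (Finset.card_le_card_of_injOn (fun v => (u, v)) ?_ ?_) (hFdeg u)
      · intro v hv
        rw [Finset.mem_coe, Finset.mem_filter] at hv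
        exact Finset.mem_filter.mpr ⟨hv.2, Or.inl rfl⟩
      · intro a _ b _ hab
        exact congrArg Prod.snd hab
    have hcol : ∀ v, ∑ u, m u v ≤ p := by
      intro v
      have h1 : ∑ u, m u v = (Finset.univ.filter (fun u => (u, v) ∈ F)).card := by
        rw [Finset.card_filter]
      rw [h1]
      refine le_trans (Finset.card_le_card_of_injOn (fun u => (u, v)) ?_ ?_) (hFdeg v)
      · intro u hu
        rw [Finset.mem_coe, Finset.mem_filter] at hu
        exact Finset.mem_filter.mpr ⟨hu.2, Or.inr rfl⟩
      · intro a _ b _ hab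
        exact congrArg Prod.fst hab
    obtain ⟨m', hmle, hr', hc'⟩ := MaoChengAux.exists_completion (ι := V) p
      (p * Fintype.card V - ∑ i, ∑ j, m i j) m hrow hcol (le_refl _)
    obtain ⟨f, hfinj, hfcnt⟩ := MaoChengAux.exists_decomp p m' hr' hc'
    have hcover : ∀ e ∈ F, ∃ k : Fin p, f k e.1 = e.2 := by
      intro e he
      have h1 : 1 ≤ m e.1 e.2 := by
        rw [hm]
        simp only [Prod.mk.eta, he, if_pos]
        exact le_refl 1
      have h2 : 1 ≤ (Finset.univ.filter (fun k => f k e.1 = e.2)).card :=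
        le_trans (le_trans h1 (hmle _ _)) (hfcnt _ _)
      obtain ⟨k, hk⟩ := Finset.card_pos.mp h2
      exact ⟨k, (Finset.mem_filter.mp hk).2⟩
    have hpne : Nonempty (Fin p) := ⟨⟨0, hp⟩⟩
    set col : V × V → Fin p := fun e =>
      if h : ∃ k : Fin p, f k e.1 = e.2 then h.choose else hpne.some with hcoldef
    have hcol2 : ∀ e ∈ F, f (col e) e.1 = e.2 := by
      intro e he
      have hex := hcover e he
      rw [hcoldef]
      simp only [dif_pos hex]
      exact hex.choose_spec
    have hinj2 : Set.InjOn (fun e : V × V => s(e.1, e.2)) ↑F := by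
      intro a ha b hb hab
      have haa := hFadj a (Finset.mem_coe.mp ha)
      have hbb := hFadj b (Finset.mem_coe.mp hb)
      simp only at hab
      rcases Sym2.eq_iff.mp hab with ⟨h1, h2⟩ | ⟨h1, h2⟩
      · exact Prod.ext h1 h2
      · exact absurd (h1 ▸ hbb.2.2) (fun hc => Set.disjoint_left.mp hdisj haa.2.1 hc)
    refine ⟨fun k => ↑((F.filter (fun e => col e = k)).image (fun e => s(e.1, e.2))),
      ?_, ?_, ?_⟩
    · intro k
      constructor
      · intro x hx
        simp only [Finset.coe_image, Set.mem_image, Finset.mem_coe, Finset.mem_filter] at hx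
        obtain ⟨e, ⟨heF, _⟩, rfl⟩ := hx
        exact G.mem_edgeSet.mpr (hFadj e heF).1
      · intro x hx y hy hxy v hvx hvy
        simp only [Finset.coe_image, Set.mem_image, Finset.mem_coe, Finset.mem_filter]
          at hx hy
        obtain ⟨e, ⟨heF, hek⟩, rfl⟩ := hx
        obtain ⟨e', ⟨heF', hek'⟩, rfl⟩ := hy
        have hee : e ≠ e' := fun h => hxy (by rw [h])
        have hfe : f k e.1 = e.2 := by rw [← hek]; exact hcol2 e heF
        have hfe' : f k e'.1 = e'.2 := by rw [← hek']; exact hcol2 e' heF'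
        rcases Sym2.mem_iff.mp hvx with h1 | h1 <;> rcases Sym2.mem_iff.mp hvy with h2 | h2
        · refine hee ?_
          have h3 : e.1 = e'.1 := by rw [← h1, ← h2]
          have h4 : e.2 = e'.2 := by rw [← hfe, ← hfe', h3]
          exact Prod.ext h3 h4
        · refine Set.disjoint_left.mp hdisj (hFadj e heF).2.1 ?_
          have : e.1 = e'.2 := by rw [← h1, ← h2]
          rw [this]
          exact (hFadj e' heF').2.2
        · refine Set.disjoint_left.mp hdisj (hFadj e' heF').2.1 ?_
          have : e'.1 = e.2 := by rw [← h2, ← h1]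
          rw [this]
          exact (hFadj e heF).2.2
        · refine hee ?_
          have h3 : e.2 = e'.2 := by rw [← h1, ← h2]
          have h4 : e.1 = e'.1 := hfinj k (by rw [hfe, hfe', h3])
          exact Prod.ext h4 h3
    · intro i j hij
      rw [Set.disjoint_left]
      intro x hxi hxj
      simp only [Finset.coe_image, Set.mem_image, Finset.mem_coe, Finset.mem_filter]
        at hxi hxj
      obtain ⟨e, ⟨heF, hek⟩, rfl⟩ := hxi
      obtain ⟨e', ⟨heF', hek'⟩, he'⟩ := hxj
      have : e' = e := hinj2 (Finset.mem_coe.mpr heF') (Finset.mem_coe.mpr heF) he'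
      rw [this] at hek'
      exact hij (by rw [← hek, ← hek'])
    · have hone : ∀ k : Fin p,
          (↑((F.filter (fun e => col e = k)).image (fun e => s(e.1, e.2))) :
            Set (Sym2 V)).ncard = (F.filter (fun e => col e = k)).card := by
        intro k
        rw [Set.ncard_coe_finset]
        exact Finset.card_image_of_injOn (hinj2.mono (by
          intro x hx
          exact Finset.mem_coe.mpr (Finset.mem_of_mem_filter x (Finset.mem_coe.mp hx))))
      rw [Finset.sum_congr rfl (fun k _ => hone k),
        ← Finset.card_eq_sum_card_fiberwise (fun e _ => Finset.mem_univ (col e)), hFcard]
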